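/- Let t ∈ ℝ. Let L(t) be the 1×3 quaternionic matrix (i, j, t·k) and M(t) the symmetric 3×3 quaternionic matrix with zero diagonal and off-diagonal entries M₁₂ = M₂₁ = t·k, M₁₃ = M₃₁ = j, M₂₃ = M₃₂ = i. For x ∈ ℍ let Δ_x be the 4×3 quaternionic matrix with first row L(t) and remaining block M(t) − x·Id₃. Then for every x ∈ ℍ and every t ∈ ℝ, every entry of the 3×3 matrix Δ_x†·Δ_x is real (i.e. lies in ℝ·1 ⊆ ℍ). -/

import Mathlib

open Quaternion Matrix

/-- The `(N+1) × N` quaternionic ADHM operator `Δ_x` built from a `1 × N` row `L`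
and an `N × N` matrix `M`: its first row is `L` and its remaining block is
`M − x·Id_N`. -/
noncomputable def adhmDelta (N : ℕ) (L : Matrix (Fin 1) (Fin N) ℍ[ℝ])
    (M : Matrix (Fin N) (Fin N) ℍ[ℝ]) (x : ℍ[ℝ]) : Matrix (Fin (N + 1)) (Fin N) ℍ[ℝ] :=
  Matrix.of fun i j =>
    Fin.cases (L 0 j) (fun i' => ((M - Matrix.diagonal fun _ => x : Matrix (Fin N) (Fin N) ℍ[ℝ]) i' j)) i

/-- `L(t) = (i, j, t·k)`, the row of the `D_{2d}`-symmetric charge-3 ADHM family. -/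
noncomputable def Ltet (t : ℝ) : Matrix (Fin 1) (Fin 3) ℍ[ℝ] :=
  !![(⟨0, 1, 0, 0⟩ : ℍ[ℝ]), (⟨0, 0, 1, 0⟩ : ℍ[ℝ]), (⟨0, 0, 0, t⟩ : ℍ[ℝ])]

/-- `M(t)`, the symmetric matrix of the `D_{2d}`-symmetric charge-3 ADHM family:
zero diagonal, `M₁₂ = t·k`, `M₁₃ = j`, `M₂₃ = i`. -/
noncomputable def Mtet (t : ℝ) : Matrix (Fin 3) (Fin 3) ℍ[ℝ] :=
  !![(0 : ℍ[ℝ]), (⟨0, 0, 0, t⟩ : ℍ[ℝ]), (⟨0, 0, 1, 0⟩ : ℍ[ℝ]);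
     (⟨0, 0, 0, t⟩ : ℍ[ℝ]), (0 : ℍ[ℝ]), (⟨0, 1, 0, 0⟩ : ℍ[ℝ]);
     (⟨0, 0, 1, 0⟩ : ℍ[ℝ]), (⟨0, 1, 0, 0⟩ : ℍ[ℝ]), (0 : ℍ[ℝ])]

noncomputable def qlitI : ℍ[ℝ] := ⟨0, 1, 0, 0⟩
noncomputable def qlitJ : ℍ[ℝ] := ⟨0, 0, 1, 0⟩
noncomputable def qlitK (t : ℝ) : ℍ[ℝ] := ⟨0, 0, 0, t⟩
@[simp] theorem qlitI_re : qlitI.re = 0 := rfl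
@[simp] theorem qlitI_imI : qlitI.imI = 1 := rfl
@[simp] theorem qlitI_imJ : qlitI.imJ = 0 := rfl
@[simp] theorem qlitI_imK : qlitI.imK = 0 := rfl
@[simp] theorem qlitJ_re : qlitJ.re = 0 := rfl
@[simp] theorem qlitJ_imI : qlitJ.imI = 0 := rfl
@[simp] theorem qlitJ_imJ : qlitJ.imJ = 1 := rfl
@[simp] theorem qlitJ_imK : qlitJ.imK = 0 := rfl
@[simp] theorem qlitK_re (t : ℝ) : (qlitK t).re = 0 := rfl
@[simp] theorem qlitK_imI (t : ℝ) : (qlitK t).imI = 0 := rfl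
@[simp] theorem qlitK_imJ (t : ℝ) : (qlitK t).imJ = 0 := rfl
@[simp] theorem qlitK_imK (t : ℝ) : (qlitK t).imK = t := rfl
theorem Ltet_eq (t : ℝ) : Ltet t = !![qlitI, qlitJ, qlitK t] := rfl
theorem Mtet_eq (t : ℝ) : Mtet t = !![0, qlitK t, qlitJ; qlitK t, 0, qlitI; qlitJ, qlitI, 0] := rfl

set_option maxHeartbeats 4000000 in
/-- for every real `t` and every `x ∈ ℍ`, each entry of the `3 × 3`
matrix `Δ_x†·Δ_x` built from the `D_{2d}`-symmetric charge-3 ADHM data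
`(L(t), M(t))` is real, i.e. lies in `ℝ·1 ⊆ ℍ`. -/
theorem adhm_tetrahedral_family_real (t : ℝ) (x : ℍ[ℝ]) :
    ∀ a b, ∃ r : ℝ,
      ((adhmDelta 3 (Ltet t) (Mtet t) x)ᴴ * adhmDelta 3 (Ltet t) (Mtet t) x) a b
        = (r : ℍ[ℝ]) := by
  have key : ∀ q : ℍ[ℝ], q.imI = 0 → q.imJ = 0 → q.imK = 0 → ∃ r : ℝ, q = (r : ℍ[ℝ]) :=
    fun q h1 h2 h3 => ⟨q.re, by ext <;> simp [h1, h2, h3]⟩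
  intro a b
  fin_cases a <;> fin_cases b <;>
  · apply key <;>
    · simp only [adhmDelta, Ltet_eq, Mtet_eq, Matrix.mul_apply, Matrix.conjTranspose_apply,
        Fin.sum_univ_succ, Fin.sum_univ_zero, Matrix.of_apply, Fin.cases_zero, Fin.cases_succ,
        Matrix.sub_apply, Matrix.diagonal_apply, Matrix.cons_val_zero, Matrix.cons_val_one,
        Matrix.head_cons, Matrix.cons_val', Matrix.empty_val', Matrix.cons_val_fin_one,
        Matrix.head_fin_const]
      simp [Matrix.cons_val_succ, Quaternion.ext_iff]
      try ring
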